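/- Let S(A) = {a_n} be an independent Stanley sequence, let k ≥ κ(A), set c = a_{2^k} and A_k = {a_0, a_1, ..., a_{2^k − 1}}, and suppose a_{2^k − 1} ≥ λ(A) + ω(A). Then for every integer x, the set A_k + x covers every integer in the set ([x, c + x) \ ((A_k ∪ O(A)) + x)) ∪ (O(A) + c + x). -/
import Mathlib


/-- A set of integers is 3-free if it contains no 3-term arithmetic progression. -/
def ThreeFreeSet (S : Set ℤ) : Prop :=
  ∀ x ∈ S, ∀ y ∈ S, ∀ z ∈ S, x < y → y < z → x + z ≠ 2 * y

/-- `a` is the Stanley sequence generated greedily from the finite 3-free set `A`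
of nonnegative integers containing 0: `a` first enumerates `A` in increasing order,
and for `n ≥ |A|`, `a n` is the least integer exceeding `a (n-1)` keeping the
set of terms so far 3-free. -/
def IsStanleySeq (A : Finset ℤ) (a : ℕ → ℤ) : Prop :=
  (0 : ℤ) ∈ A ∧ (∀ x ∈ A, 0 ≤ x) ∧ ThreeFreeSet ↑A ∧
  StrictMono a ∧ (∀ i < A.card, a i ∈ A) ∧
  ∀ n, A.card ≤ n →
    IsLeast {m : ℤ | a (n - 1) < m ∧ ThreeFreeSet (a '' Set.Iio n ∪ {m})} (a n)

/-- The two defining conditions of an independent Stanley sequence,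
for a given λ and κ. -/
def IndepParams (a : ℕ → ℤ) (lam : ℤ) (κ : ℕ) : Prop :=
  ∀ k, κ ≤ k →
    (∀ i < 2 ^ k, a (2 ^ k + i) = a (2 ^ k) + a i) ∧
    a (2 ^ k) = 2 * a (2 ^ k - 1) + 1 - lam

/-- A Stanley sequence is independent if `IndepParams` holds for some λ and κ. -/
def Independent (a : ℕ → ℤ) : Prop := ∃ lam κ, IndepParams a lam κ

/-- κ(A): the minimal κ witnessing independence. -/
noncomputable def kappa (a : ℕ → ℤ) : ℕ := sInf {κ | ∃ lam, IndepParams a lam κ}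

/-- λ(A), recovered from the defining equation at k = κ(A). -/
noncomputable def lambdaA (a : ℕ → ℤ) : ℤ :=
  2 * a (2 ^ kappa a - 1) + 1 - a (2 ^ kappa a)

/-- The repeat factor ρ(A) = a_{2^{κ(A)}}. -/
noncomputable def rho (a : ℕ → ℤ) : ℤ := a (2 ^ kappa a)

/-- The scaling factor α(A), satisfying a_{2^k} = α·3^k for all k ≥ κ(A). -/
noncomputable def scalingFactor (a : ℕ → ℤ) : ℚ :=
  (a (2 ^ kappa a) : ℚ) / 3 ^ kappa a

/-- An integer `x` is covered by a set `S` if there are `y < z < x` in `S`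
with `y, z, x` in arithmetic progression. -/
def Covers (S : Set ℤ) (x : ℤ) : Prop :=
  ∃ y z, y ∈ S ∧ z ∈ S ∧ y < z ∧ z < x ∧ 2 * z = y + x

/-- An integer `x` is jointly covered by `S` and `T` if there are `y < z < x`
with `y ∈ S`, `z ∈ T`, and `y, z, x` in arithmetic progression. -/
def JointlyCovers (S T : Set ℤ) (x : ℤ) : Prop :=
  ∃ y z, y ∈ S ∧ z ∈ T ∧ y < z ∧ z < x ∧ 2 * z = y + x

/-- O(A): nonnegative integers neither in the Stanley sequence nor covered by it. -/
def OSet (a : ℕ → ℤ) : Set ℤ :=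
  {x | 0 ≤ x ∧ x ∉ Set.range a ∧ ¬ Covers (Set.range a) x}

/-- ω(A): the maximum element of O(A). -/
noncomputable def omegaA (a : ℕ → ℤ) : ℤ := sSup (OSet a)

/-- The translate `S + t` of a set of integers. -/
def shift (S : Set ℤ) (t : ℤ) : Set ℤ := (· + t) '' S

/-- A triadic number: a rational whose denominator in lowest terms is a power of 3. -/
def IsTriadic (q : ℚ) : Prop := ∃ j : ℕ, q.den = 3 ^ j

lemma threeFree_mono {S T : Set ℤ} (h : S ⊆ T) (hT : ThreeFreeSet T) : ThreeFreeSet S :=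
  fun x hx y hy z hz => hT x (h hx) y (h hy) z (h hz)

lemma stanley_card_pos (A : Finset ℤ) (a : ℕ → ℤ) (hA : IsStanleySeq A a) : 0 < A.card :=
  Finset.card_pos.mpr ⟨0, hA.1⟩

lemma stanley_a0 (A : Finset ℤ) (a : ℕ → ℤ) (hA : IsStanleySeq A a) : a 0 = 0 := by
  obtain ⟨h0, hpos, _, hmono, hmem, _⟩ := hA
  have hcard : 0 < A.card := Finset.card_pos.mpr ⟨0, h0⟩
  have himg : Finset.image a (Finset.range A.card) = A := by
    apply Finset.eq_of_subset_of_card_le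
    · intro x hx
      rw [Finset.mem_image] at hx
      obtain ⟨i, hi, rfl⟩ := hx
      exact hmem i (Finset.mem_range.mp hi)
    · rw [Finset.card_image_of_injective _ hmono.injective, Finset.card_range]
  have h0' : (0:ℤ) ∈ Finset.image a (Finset.range A.card) := by rw [himg]; exact h0
  rw [Finset.mem_image] at h0'
  obtain ⟨j, _, hje⟩ := h0'
  have h1 : a 0 ≤ a j := hmono.monotone (Nat.zero_le j)
  have h0le : 0 ≤ a 0 := hpos _ (hmem 0 hcard)
  omega

lemma stanley_nonneg (A : Finset ℤ) (a : ℕ → ℤ) (hA : IsStanleySeq A a) (n : ℕ) :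
    0 ≤ a n := by
  have := hA.2.2.2.1.monotone (Nat.zero_le n)
  rw [stanley_a0 A a hA] at this
  exact this

lemma stanley_ge (A : Finset ℤ) (a : ℕ → ℤ) (hA : IsStanleySeq A a) (n : ℕ) :
    (n : ℤ) ≤ a n := by
  induction n with
  | zero => simp [stanley_a0 A a hA]
  | succ n ih =>
    have h : a n < a (n + 1) := hA.2.2.2.1 (Nat.lt_succ_self n)
    push_cast
    omega

lemma oset_le (A : Finset ℤ) (a : ℕ → ℤ) (hA : IsStanleySeq A a) {x : ℤ}
    (hx : x ∈ OSet a) : x ≤ a (A.card - 1) := by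
  by_contra hgt
  push_neg at hgt
  obtain ⟨hx0, hxr, hxc⟩ := hx
  have hcard : 0 < A.card := stanley_card_pos A a hA
  obtain ⟨h0, hpos, h3, hmono, hmem, hleast⟩ := hA
  have hex : ∃ n, x < a n := by
    refine ⟨(x+1).toNat, ?_⟩
    have h1 := stanley_ge A a ⟨h0, hpos, h3, hmono, hmem, hleast⟩ (x+1).toNat
    omega
  set n := Nat.find hex with hn
  have hxn : x < a n := Nat.find_spec hex
  have hmin : ∀ q < n, a q ≤ x := fun q hq => le_of_not_gt (Nat.find_min hex hq)
  have hncard : A.card ≤ n := by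
    by_contra hlt
    push_neg at hlt
    have h1 : a (A.card - 1) < a n := lt_of_lt_of_le hgt hxn.le
    have h2 : A.card - 1 < n := hmono.lt_iff_lt.mp h1
    omega
  have hn1 : a (n - 1) < x := by
    have h1 : a (n-1) ≤ x := hmin (n-1) (by omega)
    have h2 : a (n-1) ≠ x := fun h => hxr ⟨n-1, h⟩
    omega
  have hL := hleast n hncard
  -- x is not in the least-set since x < a n
  have hxnot : ¬ (a (n-1) < x ∧ ThreeFreeSet (a '' Set.Iio n ∪ {x})) := by
    intro hmem'
    exact absurd (hL.2 hmem') (not_le.mpr hxn)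
  have h3f : ¬ ThreeFreeSet (a '' Set.Iio n ∪ {x}) := fun h => hxnot ⟨hn1, h⟩
  -- the image itself is 3-free
  have himg3 : ThreeFreeSet (a '' Set.Iio n) :=
    threeFree_mono Set.subset_union_left hL.1.2
  unfold ThreeFreeSet at h3f
  push_neg at h3f
  obtain ⟨p, hp, q, hq, r, hr, hpq, hqr, heq⟩ := h3f
  have himlt : ∀ u ∈ a '' Set.Iio n, u < x := by
    rintro u ⟨i, hi, rfl⟩
    have : i ≤ n - 1 := by
      have := hi; simp only [Set.mem_Iio] at this; omega
    calc a i ≤ a (n-1) := hmono.monotone this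
      _ < x := hn1
  -- r must equal x
  have hrx : r = x := by
    rcases hr with hr | hr
    · exfalso
      have hpim : p ∈ a '' Set.Iio n := by
        rcases hp with hp | hp
        · exact hp
        · exfalso; rw [Set.mem_singleton_iff] at hp; subst hp
          exact absurd (himlt r hr) (by omega)
      have hqim : q ∈ a '' Set.Iio n := by
        rcases hq with hq | hq
        · exact hq
        · exfalso; rw [Set.mem_singleton_iff] at hq; subst hq
          exact absurd (himlt r hr) (by omega)
      exact himg3 p hpim q hqim r hr hpq hqr heq
    · exact hr
  subst hrx
  have hpim : p ∈ a '' Set.Iio n := by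
    rcases hp with hp | hp
    · exact hp
    · exfalso; rw [Set.mem_singleton_iff] at hp; omega
  have hqim : q ∈ a '' Set.Iio n := by
    rcases hq with hq | hq
    · exact hq
    · exfalso; rw [Set.mem_singleton_iff] at hq; omega
  apply hxc
  obtain ⟨i, _, hi⟩ := hpim
  obtain ⟨j, _, hj⟩ := hqim
  exact ⟨p, q, ⟨i, hi⟩, ⟨j, hj⟩, hpq, hqr, by omega⟩

lemma oset_bddAbove (A : Finset ℤ) (a : ℕ → ℤ) (hA : IsStanleySeq A a) :
    BddAbove (OSet a) :=
  ⟨a (A.card - 1), fun _ hx => oset_le A a hA hx⟩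

lemma indepParams_kappa (a : ℕ → ℤ) (hInd : Independent a) :
    IndepParams a (lambdaA a) (kappa a) := by
  obtain ⟨lam, κ, h⟩ := hInd
  have hne : {κ | ∃ lam, IndepParams a lam κ}.Nonempty := ⟨κ, lam, h⟩
  have hmem : kappa a ∈ {κ | ∃ lam, IndepParams a lam κ} := Nat.sInf_mem hne
  obtain ⟨lam', h'⟩ := hmem
  have heq : lam' = lambdaA a := by
    have h2 := (h' (kappa a) le_rfl).2
    unfold lambdaA
    omega
  rwa [heq] at h'

/-- Lemma 3.2(a): `A_k + x` covers
`([x, c+x) \ ((A_k ∪ O(A)) + x)) ∪ (O(A) + c + x)`. -/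
theorem cover_part_a (A : Finset ℤ) (a : ℕ → ℤ)
    (hA : IsStanleySeq A a) (hInd : Independent a) (k : ℕ) (hk : kappa a ≤ k)
    (c : ℤ) (hc : c = a (2 ^ k))
    (Ak : Set ℤ) (hAk : Ak = a '' Set.Iio (2 ^ k))
    (hbound : lambdaA a + omegaA a ≤ a (2 ^ k - 1)) :
    ∀ x : ℤ, ∀ z ∈ (Set.Ico x (c + x) \ shift (Ak ∪ OSet a) x) ∪ shift (OSet a) (c + x),
      Covers (shift Ak x) z := by
  have hIP := indepParams_kappa a hInd
  have a0 := stanley_a0 A a hA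
  have hmono := hA.2.2.2.1
  have hnn : ∀ n, 0 ≤ a n := stanley_nonneg A a hA
  set lam := lambdaA a with hlamdef
  have hk1 : kappa a ≤ k + 1 := le_trans hk (Nat.le_succ k)
  have hrec := (hIP k hk).1
  have hck : a (2^k) = 2 * a (2^k - 1) + 1 - lam := (hIP k hk).2
  have hck1 : a (2^(k+1)) = 2 * a (2^(k+1) - 1) + 1 - lam := (hIP (k+1) hk1).2
  have h1le : 1 ≤ 2^k := Nat.one_le_two_pow
  have h2k1 : 2^(k+1) = 2 * 2^k := by rw [pow_succ]; ring
  have hpow : 2^(k+1) - 1 = 2^k + (2^k - 1) := by omega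
  have hpk : (2:ℕ)^k - 1 < 2^k := by omega
  set m := a (2^k - 1) with hmdef
  have hm0 : 0 ≤ m := hnn _
  have hcm : c = 2*m + 1 - lam := by rw [hc, hck]
  have h3c : a (2^(k+1)) = 3 * c := by
    rw [hck1, hpow, hrec (2^k - 1) hpk, hc, hck]; ring
  have hc0 : 0 < c := by
    rw [hc, ← a0]
    exact hmono (by omega)
  -- index localization
  have hIdx : ∀ i, a i < c → i < 2^k := by
    intro i h; rw [hc] at h; exact hmono.lt_iff_lt.mp h
  have hIdx2 : ∀ i, a i < 2*c → i < 2^(k+1) := by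
    intro i h
    have : a i < a (2^(k+1)) := by rw [h3c]; omega
    exact hmono.lt_iff_lt.mp this
  have hsplit : ∀ i, 2^k ≤ i → i < 2^(k+1) → a i = c + a (i - 2^k) := by
    intro i h1 h2
    have h3 := hrec (i - 2^k) (by omega)
    rw [Nat.add_sub_cancel' h1] at h3
    rw [h3, hc]
  have hOb : BddAbove (OSet a) := oset_bddAbove A a hA
  have hle_omega : ∀ w ∈ OSet a, w ≤ omegaA a := fun w hw => le_csSup hOb hw
  have hCov : ∀ w : ℤ, 0 ≤ w → w ∉ Set.range a → w ∉ OSet a → Covers (Set.range a) w := by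
    intro w h0 h1 h2
    by_contra h3
    exact h2 ⟨h0, h1, h3⟩
  intro x z hz
  have hAkmem : ∀ i, i < 2^k → a i + x ∈ shift Ak x :=
    fun i hi => ⟨a i, by rw [hAk]; exact ⟨i, hi, rfl⟩, rfl⟩
  rcases hz with ⟨⟨hzx, hzc⟩, hznot⟩ | ⟨w, hw, hwz⟩
  · -- Case 1: z ∈ [x, c+x) \ ((A_k ∪ O(A)) + x)
    set w := z - x with hwdef
    have hw0 : 0 ≤ w := by omega
    have hwc : w < c := by omega
    have hwnotu : w ∉ Ak ∪ OSet a := by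
      intro hmem
      exact hznot ⟨w, hmem, show w + x = z by omega⟩
    have hwAk : w ∉ Ak := fun h => hwnotu (Or.inl h)
    have hwO : w ∉ OSet a := fun h => hwnotu (Or.inr h)
    have hwr : w ∉ Set.range a := by
      rintro ⟨i, hi⟩
      exact hwAk (by rw [hAk]; exact ⟨i, hIdx i (by omega), hi⟩)
    obtain ⟨y', z', ⟨i, hi⟩, ⟨j, hj⟩, h1, h2, h3⟩ := hCov w hw0 hwr hwO
    subst hi; subst hj
    have hjlt : j < 2^k := hIdx j (by omega)
    have hilt : i < 2^k := by
      have : i < j := hmono.lt_iff_lt.mp h1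
      omega
    exact ⟨a i + x, a j + x, hAkmem i hilt, hAkmem j hjlt, by omega, by omega, by omega⟩
  · -- Case 2: z = w + (c + x), w ∈ O(A)
    have hwz' : w + (c + x) = z := hwz
    have hw0 : 0 ≤ w := hw.1
    have hwm : w ≤ m - lam := by
      have h1 := hle_omega w hw
      have h2 := hbound
      omega
    have hcw : m + 1 ≤ c - w := by omega
    have hwcr : w + c ∉ Set.range a := by
      rintro ⟨i, hi⟩
      have hige : 2^k ≤ i := by
        have : a (2^k) ≤ a i := by rw [hi, hc]; omega
        exact hmono.le_iff_le.mp this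
      have hilt : i < 2^(k+1) := hIdx2 i (by omega)
      have := hsplit i hige hilt
      exact hw.2.1 ⟨i - 2^k, by omega⟩
    have hwcO : w + c ∉ OSet a := by
      intro h
      have h1 := hle_omega _ h
      have h2 := hbound
      omega
    obtain ⟨y', z', ⟨i, hi⟩, ⟨j, hj⟩, h1, h2, h3⟩ := hCov (w + c) (by omega) hwcr hwcO
    subst hi; subst hj
    have hij : i < j := hmono.lt_iff_lt.mp h1
    by_cases hjlt : j < 2^k
    · exact ⟨a i + x, a j + x, hAkmem i (by omega), hAkmem j hjlt, by omega, by omega,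
        by omega⟩
    · exfalso
      push_neg at hjlt
      have hjlt2 : j < 2^(k+1) := hIdx2 j (by omega)
      have hjsp := hsplit j hjlt hjlt2
      have hajw : a (j - 2^k) < w := by omega
      by_cases hilt : i < 2^k
      · -- a i ≤ m but a i = c + 2 a(j-2^k) - w ≥ c - w ≥ m + 1
        have him : a i ≤ m := by
          rw [hmdef]
          exact hmono.monotone (by omega)
        have hji0 : 0 ≤ a (j - 2^k) := hnn _
        omega
      · push_neg at hilt
        have hilt2 : i < 2^(k+1) := hIdx2 i (by omega)
        have hisp := hsplit i hilt hilt2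
        -- then 2 a(j-2^k) = a(i-2^k) + w with a(i-2^k) < a(j-2^k) < w : w covered
        apply hw.2.2
        exact ⟨a (i - 2^k), a (j - 2^k), ⟨i - 2^k, rfl⟩, ⟨j - 2^k, rfl⟩,
          by omega, hajw, by omega⟩
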